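/- For every real X with 0 ≤ X < 1: (i) the double series D(X) = ∑_{n,k≥0} (a)_{2k+n}(1/2)_n(b)_n / ((3/2)_{k+n}(b+1)_{k+n} n!) · (−X/4)^k converges; (ii) for every k the series F_k = ∑_{j≥0} (a+2k)_j (1/2)_j (b)_j / ((3/2+k)_j (b+1+k)_j j!) converges; (iii) the series ∑_{k≥0} C_k F_k (−X)^k converges and equals D(X), where C_k = 4^{−k}(a)_{2k}/((3/2)_k (b+1)_k). -/

import Mathlib

/-- Pochhammer symbol (rising factorial) for a real argument. -/
noncomputable def poch (x : ℝ) (n : ℕ) : ℝ := (ascPochhammer ℝ n).eval x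

lemma poch_zero (x : ℝ) : poch x 0 = 1 := by simp [poch]

lemma poch_succ (x : ℝ) (n : ℕ) : poch x (n + 1) = poch x n * (x + n) :=
  ascPochhammer_succ_eval n x

lemma poch_pos {x : ℝ} (hx : 0 < x) (n : ℕ) : 0 < poch x n :=
  ascPochhammer_pos n x hx

lemma poch_add (x : ℝ) (m n : ℕ) : poch x (m + n) = poch x m * poch (x + m) n := by
  have h := congrArg (Polynomial.eval x) (ascPochhammer_mul (S := ℝ) m n)
  simpa [poch, Polynomial.eval_mul, Polynomial.eval_comp] using h.symm

noncomputable def Sterm (a b : ℝ) (k j : ℕ) : ℝ :=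
  poch (a + 2 * (k : ℝ)) j * poch (1 / 2) j * poch b j /
    (poch (3 / 2 + (k : ℝ)) j * poch (b + 1 + (k : ℝ)) j * (Nat.factorial j : ℝ))

lemma Sterm_zero (a b : ℝ) (k : ℕ) : Sterm a b k 0 = 1 := by
  simp [Sterm, poch_zero]

lemma Sterm_succ (a b : ℝ) (hb : -(1:ℝ)/2 < b) (k j : ℕ) :
    Sterm a b k (j + 1) = Sterm a b k j *
      ((a + 2 * k + j) * (1 / 2 + j) * (b + j) /
        ((3 / 2 + k + j) * (b + 1 + k + j) * (j + 1))) := by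
  have h1 : (0:ℝ) < poch (3 / 2 + (k : ℝ)) j := poch_pos (by positivity) j
  have hk0 : (0:ℝ) ≤ (k:ℝ) := Nat.cast_nonneg k
  have hj0 : (0:ℝ) ≤ (j:ℝ) := Nat.cast_nonneg j
  have h2 : (0:ℝ) < poch (b + 1 + (k : ℝ)) j := poch_pos (by linarith) j
  have h3 : (0:ℝ) < (Nat.factorial j : ℝ) := by positivity
  have h4 : (0:ℝ) < 3 / 2 + (k:ℝ) + (j:ℝ) := by positivity
  have h5 : (0:ℝ) < b + 1 + (k:ℝ) + (j:ℝ) := by linarith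
  have h6 : (0:ℝ) < ((j:ℝ) + 1) := by positivity
  rw [Sterm, Sterm, poch_succ, poch_succ, poch_succ, poch_succ, poch_succ, Nat.factorial_succ]
  push_cast
  field_simp

lemma key_ineq (a b n k : ℝ) (ha0 : 0 < a) (ha2 : a < 2)
    (hb1 : -(1:ℝ)/2 < b) (hb2 : b ≤ 3/2) (hn : 1 ≤ n) (hk : 0 ≤ k) :
    (a+2*k+n)*(1/2+n)*(b+n)*(n+4) ≤ (n+4-(2-a/2))*(3/2+k+n)*(b+1+k+n)*(n+1) := by
  obtain ⟨u, hu, rfl⟩ : ∃ u : ℝ, 0 ≤ u ∧ n = u + 1 := ⟨n - 1, by linarith, by ring⟩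
  nlinarith [mul_nonneg hu (sq_nonneg (u - k)), mul_nonneg hu (sq_nonneg (k - 1)),
    sq_nonneg (k - 1), mul_nonneg (mul_nonneg hu hu) hu, mul_nonneg hu (mul_nonneg hk hk),
    mul_nonneg (mul_nonneg hu hu) hk, mul_nonneg hu hk, mul_nonneg hk hk,
    mul_nonneg (mul_nonneg hu hu) (sub_nonneg.2 ha2.le),
    mul_nonneg hu (sub_nonneg.2 ha2.le), mul_nonneg hk (sub_nonneg.2 ha2.le),
    mul_nonneg (sub_nonneg.2 hb2) (sub_nonneg.2 ha2.le),
    mul_nonneg (by linarith : (0:ℝ) ≤ b + 1/2) (sub_nonneg.2 ha2.le),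
    mul_nonneg hu (sub_nonneg.2 hb2), mul_nonneg hk (sub_nonneg.2 hb2),
    mul_nonneg hu (by linarith : (0:ℝ) ≤ b + 1/2), mul_nonneg hk (by linarith : (0:ℝ) ≤ b + 1/2)]

lemma bound_S (a b : ℝ) (ha0 : 0 < a) (ha2 : a < 2)
    (hb : -(1:ℝ)/2 < b) (hb2 : b ≤ 3/2) (k : ℕ) :
    ∃ C : ℝ, 0 ≤ C ∧ ∀ j : ℕ, |Sterm a b k j| ≤ C * ((j:ℝ) + 1) ^ (-(2 - a/2)) := by
  set p : ℝ := 2 - a/2 with hp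
  have hp1 : 1 ≤ p := by rw [hp]; linarith
  have hp0 : 0 < p := by linarith
  -- one-step decay of the weighted terms
  have hstep : ∀ j : ℕ, 1 ≤ j →
      |Sterm a b k (j+1)| * ((j:ℝ) + 1 + 3) ^ p ≤ |Sterm a b k j| * ((j:ℝ) + 3) ^ p := by
    intro j hj
    have hx : (1:ℝ) ≤ (j:ℝ) := by exact_mod_cast hj
    have hk0 : (0:ℝ) ≤ (k:ℝ) := Nat.cast_nonneg k
    set x : ℝ := (j:ℝ)
    have hnum : (0:ℝ) ≤ (a + 2*k + x) * (1/2 + x) * (b + x) := by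
      have : (0:ℝ) ≤ b + x := by linarith
      have h1 : (0:ℝ) ≤ a + 2*k + x := by linarith
      have h2 : (0:ℝ) ≤ 1/2 + x := by linarith
      positivity
    have hden : (0:ℝ) < (3/2 + k + x) * (b + 1 + k + x) * (x + 1) := by
      have h1 : (0:ℝ) < 3/2 + (k:ℝ) + x := by linarith
      have h2 : (0:ℝ) < b + 1 + k + x := by linarith
      have h3 : (0:ℝ) < x + 1 := by linarith
      positivity
    have hr0 : (0:ℝ) ≤ (a + 2*k + x) * (1/2 + x) * (b + x) /
        ((3/2 + k + x) * (b + 1 + k + x) * (x + 1)) := div_nonneg hnum hden.le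
    have habs : |Sterm a b k (j+1)| = |Sterm a b k j| *
        ((a + 2*k + x) * (1/2 + x) * (b + x) /
          ((3/2 + k + x) * (b + 1 + k + x) * (x + 1))) := by
      rw [Sterm_succ a b hb k j, abs_mul, abs_of_nonneg hr0]
    -- ratio bound via key inequality and Bernoulli
    have hx4 : (0:ℝ) < x + 4 := by linarith
    have hratio : (a + 2*k + x) * (1/2 + x) * (b + x) /
        ((3/2 + k + x) * (b + 1 + k + x) * (x + 1)) ≤ (x + 4 - p) / (x + 4) := by
      rw [div_le_div_iff₀ hden hx4]
      calc (a + 2*k + x) * (1/2 + x) * (b + x) * (x + 4)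
          ≤ (x + 4 - p) * (3/2 + k + x) * (b + 1 + k + x) * (x + 1) :=
            key_ineq a b x (k:ℝ) ha0 ha2 hb hb2 hx hk0
        _ = (x + 4 - p) * ((3/2 + k + x) * (b + 1 + k + x) * (x + 1)) := by ring
    have hbern : (x + 4 - p) / (x + 4) ≤ ((x + 3) / (x + 4)) ^ p := by
      have hs : (-1:ℝ) ≤ -(1/(x+4)) := by
        rw [neg_le_neg_iff]
        rw [div_le_one hx4]; linarith
      have := one_add_mul_self_le_rpow_one_add hs hp1
      have he1 : (1:ℝ) + -(1/(x+4)) = (x + 3)/(x + 4) := by field_simp; ring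
      have he2 : (1:ℝ) + p * -(1/(x+4)) = (x + 4 - p)/(x + 4) := by field_simp; ring
      rw [he1, he2] at this
      exact this
    have hpow4 : (0:ℝ) < (x + 4) ^ p := Real.rpow_pos_of_pos hx4 p
    have hdivpow : ((x + 3) / (x + 4)) ^ p = (x + 3) ^ p / (x + 4) ^ p :=
      Real.div_rpow (show (0:ℝ) ≤ x + 3 by linarith) hx4.le p
    have hfinal : (a + 2*k + x) * (1/2 + x) * (b + x) /
        ((3/2 + k + x) * (b + 1 + k + x) * (x + 1)) * (x + 4) ^ p ≤ (x + 3) ^ p := by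
      calc _ ≤ ((x + 3) / (x + 4)) ^ p * (x + 4) ^ p :=
            mul_le_mul_of_nonneg_right (hratio.trans hbern) hpow4.le
        _ = (x + 3) ^ p := by rw [hdivpow]; field_simp
    have hcast : (x + 1 + 3 : ℝ) = x + 4 := by ring
    rw [habs, hcast, mul_assoc]
    exact mul_le_mul_of_nonneg_left hfinal (abs_nonneg _)
  -- monotonicity: weighted terms bounded by value at 1
  have hW : ∀ j : ℕ, 1 ≤ j →
      |Sterm a b k j| * ((j:ℝ) + 3) ^ p ≤ |Sterm a b k 1| * ((1:ℝ) + 3) ^ p := by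
    intro j hj
    induction j with
    | zero => omega
    | succ m ih =>
      rcases Nat.eq_or_lt_of_le hj with h | h
      · simp [← h]
      · have hm : 1 ≤ m := by omega
        have := hstep m hm
        have hc : ((m:ℝ) + 1 + 3 : ℝ) = ((m+1 : ℕ) : ℝ) + 3 := by push_cast; ring
        rw [hc] at this
        exact this.trans (ih hm)
  refine ⟨max (|Sterm a b k 1| * ((1:ℝ) + 3) ^ p) 1, le_trans zero_le_one (le_max_right _ _), ?_⟩
  intro j
  rcases Nat.eq_zero_or_pos j with rfl | hj
  · rw [Sterm_zero]
    simp only [Nat.cast_zero, zero_add, abs_one, Real.one_rpow]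
    rw [mul_one]
    exact le_max_right _ 1
  · have h1p : (0:ℝ) < ((j:ℝ) + 1) ^ p := Real.rpow_pos_of_pos (by positivity) p
    have h3p : (0:ℝ) < ((j:ℝ) + 3) ^ p := Real.rpow_pos_of_pos (by positivity) p
    have hWj := hW j hj
    have hle : |Sterm a b k j| * ((j:ℝ) + 1) ^ p ≤ max (|Sterm a b k 1| * ((1:ℝ) + 3) ^ p) 1 := by
      have hmono : ((j:ℝ) + 1) ^ p ≤ ((j:ℝ) + 3) ^ p :=
        Real.rpow_le_rpow (by positivity) (by linarith) hp0.le
      calc |Sterm a b k j| * ((j:ℝ) + 1) ^ p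
          ≤ |Sterm a b k j| * ((j:ℝ) + 3) ^ p :=
            mul_le_mul_of_nonneg_left hmono (abs_nonneg _)
        _ ≤ |Sterm a b k 1| * ((1:ℝ) + 3) ^ p := hWj
        _ ≤ _ := le_max_left _ _
    have hdiv := (le_div_iff₀ h1p).2 hle
    have heq : max (|Sterm a b k 1| * ((1:ℝ) + 3) ^ p) 1 / ((j:ℝ) + 1) ^ p
        = max (|Sterm a b k 1| * ((1:ℝ) + 3) ^ p) 1 * ((j:ℝ) + 1) ^ (-p) := by
      rw [Real.rpow_neg (by positivity : (0:ℝ) ≤ (j:ℝ) + 1)]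
      ring
    rw [heq] at hdiv
    exact hdiv

lemma summable_shift_rpow (p : ℝ) (hp : 1 < p) :
    Summable (fun j : ℕ => ((j:ℝ) + 1) ^ (-p)) := by
  have h : Summable (fun n : ℕ => (n : ℝ) ^ (-p)) :=
    Real.summable_nat_rpow.mpr (by linarith)
  have h2 := (summable_nat_add_iff 1).mpr h
  exact h2.congr fun n => by push_cast; ring_nf

lemma summable_S (a b : ℝ) (ha0 : 0 < a) (ha2 : a < 2)
    (hb : -(1:ℝ)/2 < b) (hb2 : b ≤ 3/2) (k : ℕ) :
    Summable (Sterm a b k) := by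
  obtain ⟨C, hC0, hC⟩ := bound_S a b ha0 ha2 hb hb2 k
  have hp : (1:ℝ) < 2 - a/2 := by linarith
  refine Summable.of_norm ?_
  refine Summable.of_nonneg_of_le (fun j => norm_nonneg _) (fun j => ?_)
    ((summable_shift_rpow _ hp).mul_left C)
  rw [Real.norm_eq_abs]
  exact hC j

noncomputable def Tt (a b X : ℝ) (nk : ℕ × ℕ) : ℝ :=
  poch a (2 * nk.2 + nk.1) * poch (1 / 2) nk.1 * poch b nk.1 /
    (poch (3 / 2) (nk.2 + nk.1) * poch (b + 1) (nk.2 + nk.1) *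
      (Nat.factorial nk.1 : ℝ)) * (-X / 4) ^ nk.2

lemma Tt_zero (a b X : ℝ) (n : ℕ) : Tt a b X (n, 0) = Sterm a b 0 n := by
  simp [Tt, Sterm]

lemma Tt_succ (a b X : ℝ) (hb : -(1:ℝ)/2 < b) (n k : ℕ) :
    Tt a b X (n, k + 1) = Tt a b X (n, k) *
      ((a + (2*k+n)) * (a + (2*k+n) + 1) / ((3/2 + ((k:ℝ)+n)) * (b + 1 + ((k:ℝ)+n)))) *
      (-X / 4) := by
  have hk0 : (0:ℝ) ≤ (k:ℝ) := Nat.cast_nonneg k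
  have hn0 : (0:ℝ) ≤ (n:ℝ) := Nat.cast_nonneg n
  have e1 : 2 * (k+1) + n = (2*k + n) + 1 + 1 := by omega
  have e2 : (k+1) + n = (k + n) + 1 := by omega
  have h1 : (0:ℝ) < poch (3/2) (k+n) := poch_pos (by norm_num) _
  have h2 : (0:ℝ) < poch (b+1) (k+n) := poch_pos (by linarith) _
  have h3 : (0:ℝ) < (Nat.factorial n : ℝ) := by positivity
  have h4 : (0:ℝ) < 3/2 + ((k:ℝ)+n) := by linarith
  have h5 : (0:ℝ) < b + 1 + ((k:ℝ)+n) := by linarith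
  simp only [Tt, e1, e2, poch_succ]
  push_cast
  field_simp
  ring

lemma Tt_bound (a b X : ℝ) (ha0 : 0 < a) (ha2 : a < 2)
    (hb : -(1:ℝ)/2 < b) (hX0 : 0 ≤ X) :
    ∀ (k n : ℕ), |Tt a b X (n, k)| ≤ |Sterm a b 0 n| * (2 * ((k:ℝ) + 1) * X ^ k) := by
  intro k
  induction k with
  | zero =>
    intro n
    rw [Tt_zero]
    have := abs_nonneg (Sterm a b 0 n)
    simp only [Nat.cast_zero, zero_add, pow_zero, mul_one]
    linarith
  | succ k ih =>
    intro n
    have hk0 : (0:ℝ) ≤ (k:ℝ) := Nat.cast_nonneg k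
    have hn0 : (0:ℝ) ≤ (n:ℝ) := Nat.cast_nonneg n
    have hden : (0:ℝ) < (3/2 + ((k:ℝ)+n)) * (b + 1 + ((k:ℝ)+n)) := by
      have h4 : (0:ℝ) < 3/2 + ((k:ℝ)+n) := by linarith
      have h5 : (0:ℝ) < b + 1 + ((k:ℝ)+n) := by linarith
      positivity
    have hnum : (0:ℝ) ≤ (a + (2*(k:ℝ)+n)) * (a + (2*(k:ℝ)+n) + 1) := by
      have : (0:ℝ) < a + (2*(k:ℝ)+n) := by linarith
      nlinarith
    set frac : ℝ := (a + (2*(k:ℝ)+n)) * (a + (2*(k:ℝ)+n) + 1) /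
        ((3/2 + ((k:ℝ)+n)) * (b + 1 + ((k:ℝ)+n))) with hfracdef
    have hfrac0 : 0 ≤ frac := div_nonneg hnum hden.le
    have hkhalf : (0:ℝ) < (k:ℝ) + 1/2 := by linarith
    have hfb : frac ≤ 4 * ((k:ℝ)+1) / ((k:ℝ)+1/2) := by
      rw [hfracdef, div_le_div_iff₀ hden hkhalf]
      nlinarith [mul_nonneg hk0 hn0, mul_nonneg hk0 hk0, mul_nonneg hn0 hn0,
        mul_nonneg (mul_nonneg hk0 hk0) hn0, mul_nonneg hk0 (sub_nonneg.2 ha2.le),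
        mul_nonneg hn0 (sub_nonneg.2 ha2.le), mul_nonneg (sub_nonneg.2 ha2.le) ha0.le,
        mul_nonneg (mul_nonneg hk0 hk0) (by linarith : (0:ℝ) ≤ b + 1/2),
        mul_nonneg hk0 (by linarith : (0:ℝ) ≤ b + 1/2),
        mul_nonneg hn0 (by linarith : (0:ℝ) ≤ b + 1/2),
        mul_nonneg (mul_nonneg hk0 hn0) (by linarith : (0:ℝ) ≤ b + 1/2)]
    have hXq : (0:ℝ) ≤ X/4 := by linarith
    have habs : |Tt a b X (n, k+1)| = |Tt a b X (n, k)| * frac * (X/4) := by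
      rw [Tt_succ a b X hb n k, abs_mul, abs_mul]
      congr 1
      · congr 1
        exact abs_of_nonneg hfrac0
      · rw [abs_div, abs_neg, abs_of_nonneg hX0]
        norm_num
    have hB0 : (0:ℝ) ≤ |Sterm a b 0 n| * (2 * ((k:ℝ) + 1) * X ^ k) := by positivity
    have step1 : |Tt a b X (n, k)| * frac * (X/4) ≤
        |Sterm a b 0 n| * (2 * ((k:ℝ) + 1) * X ^ k) * (4 * ((k:ℝ)+1) / ((k:ℝ)+1/2)) * (X/4) := by
      apply mul_le_mul_of_nonneg_right _ hXq
      exact mul_le_mul (ih n) hfb hfrac0 hB0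
    have step2 : |Sterm a b 0 n| * (2 * ((k:ℝ) + 1) * X ^ k) * (4 * ((k:ℝ)+1) / ((k:ℝ)+1/2)) * (X/4)
        ≤ |Sterm a b 0 n| * (2 * (((k:ℕ).succ : ℝ) + 1) * X ^ (k+1)) := by
      have heq : |Sterm a b 0 n| * (2 * ((k:ℝ) + 1) * X ^ k) * (4 * ((k:ℝ)+1) / ((k:ℝ)+1/2)) * (X/4)
          = |Sterm a b 0 n| * ((2 * ((k:ℝ)+1)^2 * X^(k+1)) / ((k:ℝ)+1/2)) := by
        rw [pow_succ]
        field_simp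
        ring
      rw [heq]
      apply mul_le_mul_of_nonneg_left _ (abs_nonneg _)
      rw [div_le_iff₀ hkhalf]
      have hXp : (0:ℝ) ≤ X^(k+1) := pow_nonneg hX0 _
      push_cast
      nlinarith [mul_nonneg hXp hk0]
    calc |Tt a b X (n, k+1)| = |Tt a b X (n, k)| * frac * (X/4) := habs
      _ ≤ _ := step1
      _ ≤ _ := step2

lemma Tt_eq (a b X : ℝ) (hb : -(1:ℝ)/2 < b) (n k : ℕ) :
    Tt a b X (n, k) = (poch a (2*k) * (-X/4)^k / (poch (3/2) k * poch (b+1) k)) *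
      Sterm a b k n := by
  have hk0 : (0:ℝ) ≤ (k:ℝ) := Nat.cast_nonneg k
  have h1 : (0:ℝ) < poch (3/2) k := poch_pos (by norm_num) _
  have h2 : (0:ℝ) < poch (b+1) k := poch_pos (by linarith) _
  have h3 : (0:ℝ) < poch (3/2 + (k:ℝ)) n := poch_pos (by linarith) _
  have h4 : (0:ℝ) < poch (b+1+(k:ℝ)) n := poch_pos (by linarith) _
  have h5 : (0:ℝ) < (Nat.factorial n : ℝ) := by positivity
  have ea : poch a (2*k + n) = poch a (2*k) * poch (a + 2*(k:ℝ)) n := by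
    rw [poch_add]
    congr 2
    push_cast
    ring
  have eb : poch (3/2) (k + n) = poch (3/2) k * poch (3/2 + (k:ℝ)) n := poch_add _ _ _
  have ec : poch (b+1) (k + n) = poch (b+1) k * poch (b+1+(k:ℝ)) n := poch_add _ _ _
  simp only [Tt, Sterm, ea, eb, ec]
  field_simp

theorem stmt_0 (a b X : ℝ) (ha0 : 0 < a) (ha2 : a < 2)
    (hb1 : (a - 1) / 2 < b) (hb2 : b ≤ 3 / 2)
    (hX0 : 0 ≤ X) (hX1 : X < 1) :
    Summable (fun nk : ℕ × ℕ =>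
        poch a (2 * nk.2 + nk.1) * poch (1 / 2) nk.1 * poch b nk.1 /
          (poch (3 / 2) (nk.2 + nk.1) * poch (b + 1) (nk.2 + nk.1) *
            (Nat.factorial nk.1 : ℝ)) * (-X / 4) ^ nk.2) ∧
    (∀ k : ℕ, Summable (fun j : ℕ =>
        poch (a + 2 * (k : ℝ)) j * poch (1 / 2) j * poch b j /
          (poch (3 / 2 + (k : ℝ)) j * poch (b + 1 + (k : ℝ)) j * (Nat.factorial j : ℝ)))) ∧
    Summable (fun k : ℕ =>
        (poch a (2 * k) / (4 ^ k * poch (3 / 2) k * poch (b + 1) k)) *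
          (∑' j : ℕ, poch (a + 2 * (k : ℝ)) j * poch (1 / 2) j * poch b j /
            (poch (3 / 2 + (k : ℝ)) j * poch (b + 1 + (k : ℝ)) j * (Nat.factorial j : ℝ))) *
          (-X) ^ k) ∧
    (∑' k : ℕ,
        (poch a (2 * k) / (4 ^ k * poch (3 / 2) k * poch (b + 1) k)) *
          (∑' j : ℕ, poch (a + 2 * (k : ℝ)) j * poch (1 / 2) j * poch b j /
            (poch (3 / 2 + (k : ℝ)) j * poch (b + 1 + (k : ℝ)) j * (Nat.factorial j : ℝ))) *
          (-X) ^ k) =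
      ∑' nk : ℕ × ℕ,
        poch a (2 * nk.2 + nk.1) * poch (1 / 2) nk.1 * poch b nk.1 /
          (poch (3 / 2) (nk.2 + nk.1) * poch (b + 1) (nk.2 + nk.1) *
            (Nat.factorial nk.1 : ℝ)) * (-X / 4) ^ nk.2 := by
  have hb : -(1:ℝ)/2 < b := by linarith
  have hp : (1:ℝ) < 2 - a/2 := by linarith
  obtain ⟨C, hC0, hC⟩ := bound_S a b ha0 ha2 hb hb2 0
  have hXn : ‖X‖ < 1 := by rwa [Real.norm_eq_abs, abs_of_nonneg hX0]
  have hg : Summable (fun k : ℕ => 2 * ((k:ℝ)+1) * X^k) := by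
    have h1 : Summable (fun k : ℕ => (k:ℝ)^(1:ℕ) * X^k) :=
      summable_pow_mul_geometric_of_norm_lt_one 1 hXn
    have h2 : Summable (fun k : ℕ => X^k) := summable_geometric_of_lt_one hX0 hX1
    exact ((h1.add h2).mul_left 2).congr fun k => by push_cast; ring
  have hf : Summable (fun n : ℕ => C * ((n:ℝ)+1) ^ (-(2 - a/2))) :=
    (summable_shift_rpow _ hp).mul_left C
  have hfg : Summable (fun nk : ℕ × ℕ =>
      (C * ((nk.1:ℝ)+1) ^ (-(2 - a/2))) * (2 * ((nk.2:ℝ)+1) * X^nk.2)) :=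
    hf.mul_of_nonneg hg
      (fun n => mul_nonneg hC0 (Real.rpow_nonneg (by positivity) _))
      (fun k => by positivity)
  have hT : Summable (Tt a b X) := by
    refine Summable.of_norm ?_
    refine Summable.of_nonneg_of_le (fun nk => norm_nonneg _) (fun nk => ?_) hfg
    rw [Real.norm_eq_abs]
    calc |Tt a b X nk| = |Tt a b X (nk.1, nk.2)| := rfl
      _ ≤ |Sterm a b 0 nk.1| * (2 * ((nk.2:ℝ)+1) * X^nk.2) :=
          Tt_bound a b X ha0 ha2 hb hX0 nk.2 nk.1
      _ ≤ (C * ((nk.1:ℝ)+1) ^ (-(2 - a/2))) * (2 * ((nk.2:ℝ)+1) * X^nk.2) :=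
          mul_le_mul_of_nonneg_right (hC nk.1) (by positivity)
  have hSk : ∀ k, Summable (Sterm a b k) := summable_S a b ha0 ha2 hb hb2
  have hswap : Summable (fun kn : ℕ × ℕ => Tt a b X (kn.2, kn.1)) :=
    ((Equiv.prodComm ℕ ℕ).summable_iff.mpr hT).congr fun kn => rfl
  have hEk : ∀ k : ℕ,
      (poch a (2*k) / (4^k * poch (3/2) k * poch (b+1) k)) * (∑' j, Sterm a b k j) * (-X)^k
        = ∑' n, Tt a b X (n, k) := by
    intro k
    have h1 : (0:ℝ) < poch (3/2) k := poch_pos (by norm_num) _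
    have h2 : (0:ℝ) < poch (b+1) k := poch_pos (by linarith) _
    have h4 : (0:ℝ) < (4:ℝ)^k := by positivity
    have e1 : (∑' n, Tt a b X (n,k)) =
        (poch a (2*k) * (-X/4)^k / (poch (3/2) k * poch (b+1) k)) * ∑' n, Sterm a b k n := by
      rw [← tsum_mul_left]
      exact tsum_congr fun n => Tt_eq a b X hb n k
    rw [e1]
    have e2 : ((-X/4 : ℝ))^k = (-X)^k / 4^k := by
      rw [show (-X/4 : ℝ) = (-X)/4 by ring, div_pow]
    rw [e2]
    field_simp
  have hsumfib : Summable (fun k : ℕ => ∑' n, Tt a b X (n, k)) := hswap.prod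
  refine ⟨hT, fun k => hSk k, ?_, ?_⟩
  · exact hsumfib.congr fun k => (hEk k).symm
  · calc (∑' k : ℕ,
        (poch a (2 * k) / (4 ^ k * poch (3 / 2) k * poch (b + 1) k)) *
          (∑' j : ℕ, poch (a + 2 * (k : ℝ)) j * poch (1 / 2) j * poch b j /
            (poch (3 / 2 + (k : ℝ)) j * poch (b + 1 + (k : ℝ)) j * (Nat.factorial j : ℝ))) *
          (-X) ^ k)
        = ∑' k : ℕ, ∑' n : ℕ, Tt a b X (n, k) := tsum_congr hEk
      _ = ∑' kn : ℕ × ℕ, Tt a b X (kn.2, kn.1) :=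
          (Summable.tsum_prod' hswap (fun k => hswap.prod_factor k)).symm
      _ = ∑' nk : ℕ × ℕ, Tt a b X nk := (Equiv.prodComm ℕ ℕ).tsum_eq (Tt a b X)
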